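/- arXiv:1903.11460 — 5 statements merged into one kernel-verified Lean document; each statement's English description precedes it below -/
import Mathlib

section
/- Let p be a norm on ℝⁿ that is weakly decomposable for an index set S ⊆ {1,…,n}. Then for every β ∈ ℝⁿ one has p_*(β) ≤ max{ p_*(β_S), (p^{S̄})_*(β^{S̄}) }, where p_* and (p^{S̄})_* denote the dual norms of p and p^{S̄} respectively. -/
open scoped RealInnerProductSpace

noncomputable section

/-- A function `p` is a norm on a real vector space. -/
def IsNorm {E : Type*} [AddCommGroup E] [Module ℝ E] (p : E → ℝ) : Prop :=
  (∀ x y, p (x + y) ≤ p x + p y) ∧ (∀ (c : ℝ) (x : E), p (c • x) = |c| * p x) ∧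
    (∀ x, p x = 0 ↔ x = 0)

/-- The dual norm `q_*(z) = sup {⟨z, β⟩ : q β ≤ 1}`. -/
def dualNorm {ι : Type*} [Fintype ι] (q : EuclideanSpace ℝ ι → ℝ)
    (z : EuclideanSpace ℝ ι) : ℝ :=
  sSup {r : ℝ | ∃ β : EuclideanSpace ℝ ι, q β ≤ 1 ∧ r = ⟪z, β⟫}

/-- `β_S`: the vector agreeing with `β` on `S` and zero on the complement. -/
def projS {n : ℕ} (S : Finset (Fin n)) (β : EuclideanSpace ℝ (Fin n)) :
    EuclideanSpace ℝ (Fin n) :=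
  WithLp.toLp 2 (fun i => if i ∈ S then β i else 0)

/-- `β_{S̄}`: the vector agreeing with `β` on the complement of `S` and zero on `S`. -/
def projSc {n : ℕ} (S : Finset (Fin n)) (β : EuclideanSpace ℝ (Fin n)) :
    EuclideanSpace ℝ (Fin n) :=
  WithLp.toLp 2 (fun i => if i ∈ S then 0 else β i)

/-- `β^{S̄}`: the restriction of `β` to the complement of `S`. -/
def restrC {n : ℕ} (S : Finset (Fin n)) (β : EuclideanSpace ℝ (Fin n)) :
    EuclideanSpace ℝ {i : Fin n // i ∉ S} :=
  WithLp.toLp 2 (fun j => β j.1)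

/-- Matrix-vector multiplication as a map between Euclidean spaces. -/
def mulVecE {m n : ℕ} (X : Matrix (Fin m) (Fin n) ℝ) (β : EuclideanSpace ℝ (Fin n)) :
    EuclideanSpace ℝ (Fin m) :=
  WithLp.toLp 2 (X.mulVec β)

section aux
variable {ι : Type*} [Fintype ι] {p : EuclideanSpace ℝ ι → ℝ}

lemma IsNorm.zero (hp : IsNorm p) : p 0 = 0 := (hp.2.2 0).2 rfl

lemma IsNorm.nonneg (hp : IsNorm p) (x : EuclideanSpace ℝ ι) : 0 ≤ p x := by
  have h1 := hp.1 x (-x)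
  have h2 : p (-x) = p x := by
    have := hp.2.1 (-1) x
    simpa using this
  have h0 : p 0 = 0 := hp.zero
  simp only [add_neg_cancel, h0, h2] at h1
  linarith

/-- an upper bound for `p` in terms of the Euclidean norm -/
lemma IsNorm.le_norm (hp : IsNorm p) : ∃ K : ℝ, 0 ≤ K ∧ ∀ x, p x ≤ K * ‖x‖ := by
  classical
  refine ⟨∑ i, p (EuclideanSpace.single i 1), Finset.sum_nonneg fun i _ => hp.nonneg _, ?_⟩
  intro x
  have hx : x = ∑ i, x i • EuclideanSpace.single i (1:ℝ) := by
    ext j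
    have h : (∑ i : ι, x i • EuclideanSpace.single i (1:ℝ)) j
        = ∑ i : ι, (x i • EuclideanSpace.single i (1:ℝ)) j :=
      by rw [WithLp.ofLp_sum, Finset.sum_apply]
    rw [h]
    simp [EuclideanSpace.single_apply]
  calc p x = p (∑ i, x i • EuclideanSpace.single i (1:ℝ)) := by rw [← hx]
    _ ≤ ∑ i, p (x i • EuclideanSpace.single i (1:ℝ)) := by
        classical
        refine Finset.le_sum_of_subadditive p ?_ ?_ _ _
        · exact hp.zero.le
        · exact hp.1
    _ = ∑ i, |x i| * p (EuclideanSpace.single i (1:ℝ)) := by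
        simp [hp.2.1]
    _ ≤ ∑ i, ‖x‖ * p (EuclideanSpace.single i (1:ℝ)) := by
        refine Finset.sum_le_sum fun i _ => ?_
        refine mul_le_mul_of_nonneg_right ?_ (hp.nonneg _)
        have h := abs_real_inner_le_norm (EuclideanSpace.single i (1:ℝ)) x
        have h1 : ⟪EuclideanSpace.single i (1:ℝ), x⟫ = x i := by
          simp [EuclideanSpace.inner_single_left]
        have h2 : ‖EuclideanSpace.single i (1:ℝ)‖ = 1 := by
          simp [EuclideanSpace.norm_single]
        rw [h1, h2, one_mul] at h
        exact h
    _ = (∑ i, p (EuclideanSpace.single i 1)) * ‖x‖ := by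
        rw [← Finset.mul_sum, mul_comm]

lemma IsNorm.continuous (hp : IsNorm p) : Continuous p := by
  obtain ⟨K, hK0, hK⟩ := hp.le_norm
  have hlip : LipschitzWith (Real.toNNReal K) p := by
    refine LipschitzWith.of_dist_le_mul fun x y => ?_
    have h1 : p x ≤ p (x - y) + p y := by
      have := hp.1 (x - y) y
      simpa [sub_add_cancel] using this
    have h2 : p y ≤ p (y - x) + p x := by
      have := hp.1 (y - x) x
      simpa [sub_add_cancel] using this
    have h3 : p (x - y) ≤ K * ‖x - y‖ := hK _
    have h4 : p (y - x) ≤ K * ‖x - y‖ := by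
      have := hK (y - x); rwa [norm_sub_rev] at this
    rw [Real.dist_eq, dist_eq_norm, abs_sub_le_iff]
    constructor <;> [skip; skip] <;>
      · simp only [Real.coe_toNNReal K hK0]
        linarith
  exact hlip.continuous

/-- lower bound: Euclidean norm bounded by a multiple of p -/
lemma IsNorm.norm_le (hp : IsNorm p) : ∃ C : ℝ, 0 ≤ C ∧ ∀ x, ‖x‖ ≤ C * p x := by
  by_cases h : ∃ x : EuclideanSpace ℝ ι, x ≠ 0
  · obtain ⟨x₀, hx₀⟩ := h
    have hsph : (Metric.sphere (0 : EuclideanSpace ℝ ι) 1).Nonempty := by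
      refine ⟨‖x₀‖⁻¹ • x₀, ?_⟩
      simp [norm_smul, abs_inv, inv_mul_cancel₀ (norm_ne_zero_iff.2 hx₀)]
    have hcomp : IsCompact (Metric.sphere (0 : EuclideanSpace ℝ ι) 1) := isCompact_sphere _ _
    obtain ⟨z, hz, hzmin⟩ := hcomp.exists_isMinOn hsph (hp.continuous.continuousOn)
    have hz1 : ‖z‖ = 1 := by simpa using hz
    have hzne : z ≠ 0 := by intro h; rw [h] at hz1; simp at hz1
    have hm : 0 < p z := lt_of_le_of_ne (hp.nonneg z) (fun h => hzne ((hp.2.2 z).1 h.symm))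
    refine ⟨(p z)⁻¹, le_of_lt (inv_pos.2 hm), fun x => ?_⟩
    by_cases hx : x = 0
    · simp [hx, hp.zero]
    · have hxn : (0:ℝ) < ‖x‖ := norm_pos_iff.2 hx
      have hmem : ‖x‖⁻¹ • x ∈ Metric.sphere (0 : EuclideanSpace ℝ ι) 1 := by
        simp [norm_smul, abs_inv, inv_mul_cancel₀ (ne_of_gt hxn)]
      have hle0 : p z ≤ p (‖x‖⁻¹ • x) := hzmin hmem
      have hval : p (‖x‖⁻¹ • x) = ‖x‖⁻¹ * p x := by
        rw [hp.2.1]; congr 1; rw [abs_inv, abs_of_pos hxn]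
      rw [hval] at hle0
      have h5 : p z * ‖x‖ ≤ p x := by
        have h6 := mul_le_mul_of_nonneg_right hle0 hxn.le
        have h7 : ‖x‖⁻¹ * p x * ‖x‖ = p x := by field_simp
        linarith
      have h8 : (p z)⁻¹ * (p z * ‖x‖) ≤ (p z)⁻¹ * p x :=
        mul_le_mul_of_nonneg_left h5 (inv_pos.2 hm).le
      rwa [← mul_assoc, inv_mul_cancel₀ (ne_of_gt hm), one_mul] at h8
  · push_neg at h
    refine ⟨0, le_refl _, fun x => ?_⟩
    simp [h x]

lemma dualSet_bddAbove (hp : IsNorm p) (z : EuclideanSpace ℝ ι) :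
    BddAbove {r : ℝ | ∃ β : EuclideanSpace ℝ ι, p β ≤ 1 ∧ r = ⟪z, β⟫} := by
  obtain ⟨C, hC0, hC⟩ := hp.norm_le
  refine ⟨‖z‖ * C, ?_⟩
  rintro r ⟨β, hβ, rfl⟩
  calc ⟪z, β⟫ ≤ ‖z‖ * ‖β‖ := real_inner_le_norm z β
    _ ≤ ‖z‖ * (C * p β) := mul_le_mul_of_nonneg_left (hC β) (norm_nonneg z)
    _ ≤ ‖z‖ * (C * 1) := by
        refine mul_le_mul_of_nonneg_left ?_ (norm_nonneg z)
        exact mul_le_mul_of_nonneg_left hβ hC0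
    _ = ‖z‖ * C := by ring

lemma dualNorm_nonneg (hp : IsNorm p) (z : EuclideanSpace ℝ ι) : 0 ≤ dualNorm p z := by
  refine le_csSup (dualSet_bddAbove hp z) ?_
  exact ⟨0, by simp [hp.zero], by simp⟩

lemma inner_le_dualNorm (hp : IsNorm p) (z γ : EuclideanSpace ℝ ι) :
    ⟪z, γ⟫ ≤ p γ * dualNorm p z := by
  by_cases h : p γ = 0
  · have : γ = 0 := (hp.2.2 γ).1 h
    simp [this, hp.zero]
  · have hpos : 0 < p γ := lt_of_le_of_ne (hp.nonneg γ) (Ne.symm h)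
    have hmem : ⟪z, (p γ)⁻¹ • γ⟫ ∈ {r : ℝ | ∃ β, p β ≤ 1 ∧ r = ⟪z, β⟫} := by
      refine ⟨(p γ)⁻¹ • γ, ?_, rfl⟩
      rw [hp.2.1, abs_inv, abs_of_pos hpos, inv_mul_cancel₀ h]
    have hle : ⟪z, (p γ)⁻¹ • γ⟫ ≤ dualNorm p z := le_csSup (dualSet_bddAbove hp z) hmem
    rw [real_inner_smul_right] at hle
    calc ⟪z, γ⟫ = p γ * ((p γ)⁻¹ * ⟪z, γ⟫) := by
          field_simp
      _ ≤ p γ * dualNorm p z := mul_le_mul_of_nonneg_left hle (le_of_lt hpos)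

end aux

/-- For a norm `p` weakly decomposable for `S`, the dual norm satisfies
`p_*(β) ≤ max (p_*(β_S)) ((p^{S̄})_*(β^{S̄}))` for every `β`. -/
theorem dualNorm_le_max_of_weakly_decomposable {n : ℕ} (S : Finset (Fin n))
    (p : EuclideanSpace ℝ (Fin n) → ℝ)
    (psc : EuclideanSpace ℝ {i : Fin n // i ∉ S} → ℝ)
    (hp : IsNorm p) (hpsc : IsNorm psc)
    (hdec : ∀ β : EuclideanSpace ℝ (Fin n), p (projS S β) + psc (restrC S β) ≤ p β) :
    ∀ β : EuclideanSpace ℝ (Fin n),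
      dualNorm p β ≤ max (dualNorm p (projS S β)) (dualNorm psc (restrC S β)) := by
  intro β
  classical
  set M := max (dualNorm p (projS S β)) (dualNorm psc (restrC S β)) with hM
  have hM0 : 0 ≤ M := le_trans (dualNorm_nonneg hp (projS S β)) (le_max_left _ _)
  refine Real.sSup_le ?_ hM0
  rintro r ⟨γ, hγ, rfl⟩
  have hsplit : ⟪β, γ⟫ = ⟪projS S β, projS S γ⟫ + ⟪restrC S β, restrC S γ⟫ := by
    simp only [PiLp.inner_apply, RCLike.inner_apply, conj_trivial, projS, restrC]
    have h1 : ∑ i : Fin n, ((if i ∈ S then β i else 0) * (if i ∈ S then γ i else 0))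
        = ∑ i ∈ S, β i * γ i := by
      have hcongr : ∀ i : Fin n,
          (if i ∈ S then β i else 0) * (if i ∈ S then γ i else 0)
            = if i ∈ S then β i * γ i else 0 := by
        intro i; by_cases h : i ∈ S <;> simp [h]
      rw [Finset.sum_congr rfl (fun i _ => hcongr i), Finset.sum_ite_mem,
        Finset.univ_inter]
    have h2 : ∑ j : {i : Fin n // i ∉ S}, β j.1 * γ j.1 = ∑ i ∈ Sᶜ, β i * γ i :=
      (Finset.sum_subtype Sᶜ (fun x => Finset.mem_compl) (fun i => β i * γ i)).symm
    simp only [mul_comm (γ.ofLp _) (β.ofLp _),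
      mul_comm (if _ ∈ S then γ.ofLp _ else 0) (if _ ∈ S then β.ofLp _ else 0)]
    rw [h1, h2, Finset.sum_add_sum_compl S (fun i => β i * γ i)]
  have hγS : p (projS S γ) + psc (restrC S γ) ≤ 1 := le_trans (hdec γ) hγ
  have ha : 0 ≤ p (projS S γ) := hp.nonneg _
  have hb : 0 ≤ psc (restrC S γ) := hpsc.nonneg _
  have e1 : ⟪projS S β, projS S γ⟫ ≤ p (projS S γ) * dualNorm p (projS S β) :=
    inner_le_dualNorm hp _ _
  have e2 : ⟪restrC S β, restrC S γ⟫ ≤ psc (restrC S γ) * dualNorm psc (restrC S β) :=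
    inner_le_dualNorm hpsc _ _
  have f1 : p (projS S γ) * dualNorm p (projS S β) ≤ p (projS S γ) * M :=
    mul_le_mul_of_nonneg_left (le_max_left _ _) ha
  have f2 : psc (restrC S γ) * dualNorm psc (restrC S β) ≤ psc (restrC S γ) * M :=
    mul_le_mul_of_nonneg_left (le_max_right _ _) hb
  have f3 : p (projS S γ) * M + psc (restrC S γ) * M ≤ M := by nlinarith
  rw [hsplit]
  linarith
end
end

section
/- Let p be a norm on ℝⁿ that is weakly decomposable for an index set S ⊆ {1,…,n}, let X ∈ ℝ^{m×n}, ε ∈ ℝ^m with ε ≠ 0, and β⁰ ∈ ℝⁿ. Define λ₀ = p_*(Xᵀε)/‖ε‖ and λ_m = max{ (p^{S̄})_*((Xᵀε)^{S̄})/‖ε‖, p_*((Xᵀε)_S)/‖ε‖, (p^{S̄})_*((β⁰)^{S̄}), p_*((β⁰)_S) }. Then λ₀ ≤ λ_m and p_*(β⁰) ≤ λ_m. -/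
open scoped RealInnerProductSpace

noncomputable section

/-- Type synonym used to equip a space with a different norm. -/
def NormCopy {E : Type*} (_p : E → ℝ) : Type _ := E

instance {E : Type*} [AddCommGroup E] (p : E → ℝ) : AddCommGroup (NormCopy p) :=
  inferInstanceAs (AddCommGroup E)

instance {E : Type*} [AddCommGroup E] [Module ℝ E] (p : E → ℝ) : Module ℝ (NormCopy p) :=
  inferInstanceAs (Module ℝ E)

instance {E : Type*} [AddCommGroup E] [Module ℝ E] [Module.Finite ℝ E] (p : E → ℝ) :
    Module.Finite ℝ (NormCopy p) :=
  inferInstanceAs (Module.Finite ℝ E)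

lemma IsNorm.nonneg' {E : Type*} [AddCommGroup E] [Module ℝ E] {q : E → ℝ}
    (hq : IsNorm q) (x : E) : 0 ≤ q x := by
  have h0 : q 0 = 0 := (hq.2.2 0).2 rfl
  have hneg : q (-x) = q x := by simpa using hq.2.1 (-1) x
  have h := hq.1 x (-x)
  simp only [add_neg_cancel, h0, hneg] at h
  linarith

lemma dual_bddAbove {ι : Type*} [Fintype ι] {q : EuclideanSpace ℝ ι → ℝ} (hq : IsNorm q)
    (z : EuclideanSpace ℝ ι) :
    BddAbove {r : ℝ | ∃ β : EuclideanSpace ℝ ι, q β ≤ 1 ∧ r = ⟪z, β⟫} := by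
  letI : NormedAddCommGroup (NormCopy q) :=
    AddGroupNorm.toNormedAddCommGroup
      { toFun := q
        map_zero' := (hq.2.2 0).2 rfl
        add_le' := hq.1
        neg' := fun x => by
          have h : q ((-1 : ℝ) • (x : EuclideanSpace ℝ ι)) = |(-1 : ℝ)| * q x := hq.2.1 (-1) x
          rw [neg_one_smul, abs_neg, abs_one, one_mul] at h
          exact h
        eq_zero_of_map_eq_zero' := fun x hx => (hq.2.2 x).1 hx }
  letI : NormedSpace ℝ (NormCopy q) :=
    { norm_smul_le := fun c x => le_of_eq (hq.2.1 c x) }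
  haveI : FiniteDimensional ℝ (NormCopy q) := inferInstance
  let e : NormCopy q →ₗ[ℝ] EuclideanSpace ℝ ι :=
    { toFun := fun x => x, map_add' := fun _ _ => rfl, map_smul' := fun _ _ => rfl }
  let f := LinearMap.toContinuousLinearMap e
  refine ⟨‖z‖ * ‖f‖, ?_⟩
  rintro r ⟨β, hβ, rfl⟩
  have hb : ‖β‖ ≤ ‖f‖ * q β := f.le_opNorm β
  have hfq : ‖f‖ * q β ≤ ‖f‖ * 1 := mul_le_mul_of_nonneg_left hβ (norm_nonneg f)
  calc ⟪z, β⟫ ≤ ‖z‖ * ‖β‖ := real_inner_le_norm z β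
    _ ≤ ‖z‖ * ‖f‖ := by nlinarith [norm_nonneg z]

lemma dual_mem_zero {ι : Type*} [Fintype ι] {q : EuclideanSpace ℝ ι → ℝ} (hq : IsNorm q)
    (z : EuclideanSpace ℝ ι) :
    (0 : ℝ) ∈ {r : ℝ | ∃ β : EuclideanSpace ℝ ι, q β ≤ 1 ∧ r = ⟪z, β⟫} :=
  ⟨0, by simp [(hq.2.2 0).2 rfl], by simp⟩

lemma dual_nonneg {ι : Type*} [Fintype ι] {q : EuclideanSpace ℝ ι → ℝ} (hq : IsNorm q)
    (z : EuclideanSpace ℝ ι) : 0 ≤ dualNorm q z :=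
  le_csSup (dual_bddAbove hq z) (dual_mem_zero hq z)

lemma inner_le_dualNorm_s1 {ι : Type*} [Fintype ι] {q : EuclideanSpace ℝ ι → ℝ} (hq : IsNorm q)
    (z β : EuclideanSpace ℝ ι) (hβ : q β ≤ 1) : ⟪z, β⟫ ≤ dualNorm q z :=
  le_csSup (dual_bddAbove hq z) ⟨β, hβ, rfl⟩

lemma inner_le_dual_mul {ι : Type*} [Fintype ι] {q : EuclideanSpace ℝ ι → ℝ} (hq : IsNorm q)
    (z β : EuclideanSpace ℝ ι) : ⟪z, β⟫ ≤ dualNorm q z * q β := by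
  rcases eq_or_lt_of_le (hq.nonneg' β) with h0 | hpos
  · have hβ0 : β = 0 := (hq.2.2 β).1 h0.symm
    simp [hβ0, (hq.2.2 (0 : EuclideanSpace ℝ ι)).2 rfl]
  · set c := q β with hc
    have h1 : q (c⁻¹ • β) = 1 := by
      rw [hq.2.1, abs_of_pos (inv_pos.2 hpos), inv_mul_cancel₀ hpos.ne']
    have h2 : ⟪z, c⁻¹ • β⟫ ≤ dualNorm q z := inner_le_dualNorm_s1 hq z _ h1.le
    rw [real_inner_smul_right] at h2
    calc ⟪z, β⟫ = c * (c⁻¹ * ⟪z, β⟫) := by field_simp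
      _ ≤ c * dualNorm q z := mul_le_mul_of_nonneg_left h2 hpos.le
      _ = dualNorm q z * c := mul_comm _ _

lemma inner_split {n : ℕ} (S : Finset (Fin n)) (z β : EuclideanSpace ℝ (Fin n)) :
    ⟪z, β⟫ = ⟪projS S z, projS S β⟫ + ⟪restrC S z, restrC S β⟫ := by
  have h1 : ⟪projS S z, projS S β⟫ = ∑ i ∈ S, z i * β i := by
    simp only [PiLp.inner_apply, RCLike.inner_apply, conj_trivial, projS]
    rw [← Finset.sum_subset (Finset.subset_univ S)]
    · exact Finset.sum_congr rfl fun i hi => by simp [hi, mul_comm]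
    · intro i _ hi; simp [hi]
  have h2 : ⟪restrC S z, restrC S β⟫ = ∑ i ∈ Sᶜ, z i * β i := by
    simp only [PiLp.inner_apply, RCLike.inner_apply, conj_trivial, restrC]
    rw [Finset.sum_subtype Sᶜ (fun i => Finset.mem_compl) (fun i => z i * β i)]
    exact Finset.sum_congr rfl fun i _ => mul_comm _ _
  have h3 : ⟪z, β⟫ = ∑ i, z i * β i := by
    simp [PiLp.inner_apply, RCLike.inner_apply, mul_comm]
  rw [h1, h2, h3, Finset.sum_add_sum_compl]

lemma dual_le_max {n : ℕ} (S : Finset (Fin n)) (p : EuclideanSpace ℝ (Fin n) → ℝ)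
    (psc : EuclideanSpace ℝ {i : Fin n // i ∉ S} → ℝ)
    (hp : IsNorm p) (hpsc : IsNorm psc)
    (hdec : ∀ β : EuclideanSpace ℝ (Fin n), p (projS S β) + psc (restrC S β) ≤ p β)
    (z : EuclideanSpace ℝ (Fin n)) :
    dualNorm p z ≤ max (dualNorm psc (restrC S z)) (dualNorm p (projS S z)) := by
  refine csSup_le ⟨0, dual_mem_zero hp z⟩ ?_
  rintro r ⟨β, hβ, rfl⟩
  have hsplit := inner_split S z β
  have h1 : ⟪projS S z, projS S β⟫ ≤ dualNorm p (projS S z) * p (projS S β) :=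
    inner_le_dual_mul hp _ _
  have h2 : ⟪restrC S z, restrC S β⟫ ≤ dualNorm psc (restrC S z) * psc (restrC S β) :=
    inner_le_dual_mul hpsc _ _
  have ha : 0 ≤ p (projS S β) := hp.nonneg' _
  have hb : 0 ≤ psc (restrC S β) := hpsc.nonneg' _
  have hab : p (projS S β) + psc (restrC S β) ≤ 1 := (hdec β).trans hβ
  have hA : dualNorm p (projS S z) ≤ max (dualNorm psc (restrC S z)) (dualNorm p (projS S z)) :=
    le_max_right _ _
  have hB : dualNorm psc (restrC S z) ≤ max (dualNorm psc (restrC S z)) (dualNorm p (projS S z)) :=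
    le_max_left _ _
  have hM : 0 ≤ max (dualNorm psc (restrC S z)) (dualNorm p (projS S z)) :=
    le_trans (dual_nonneg hpsc _) hB
  nlinarith [mul_le_mul_of_nonneg_right hA ha, mul_le_mul_of_nonneg_right hB hb,
    mul_le_mul_of_nonneg_left hab hM]

/-- `λ₀ ≤ λ_m` and `p_*(β⁰) ≤ λ_m`. -/
theorem lambda_zero_le_lambda_m {m n : ℕ} (S : Finset (Fin n))
    (p : EuclideanSpace ℝ (Fin n) → ℝ)
    (psc : EuclideanSpace ℝ {i : Fin n // i ∉ S} → ℝ)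
    (hp : IsNorm p) (hpsc : IsNorm psc)
    (hdec : ∀ β : EuclideanSpace ℝ (Fin n), p (projS S β) + psc (restrC S β) ≤ p β)
    (X : Matrix (Fin m) (Fin n) ℝ) (ε : EuclideanSpace ℝ (Fin m)) (hε : ε ≠ 0)
    (β0 : EuclideanSpace ℝ (Fin n))
    (lam0 lamm : ℝ)
    (hlam0 : lam0 = dualNorm p (mulVecE X.transpose ε) / ‖ε‖)
    (hlamm : lamm = max (max (dualNorm psc (restrC S (mulVecE X.transpose ε)) / ‖ε‖)
                          (dualNorm p (projS S (mulVecE X.transpose ε)) / ‖ε‖))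
                      (max (dualNorm psc (restrC S β0)) (dualNorm p (projS S β0)))) :
    lam0 ≤ lamm ∧ dualNorm p β0 ≤ lamm := by
  have hεpos : (0 : ℝ) < ‖ε‖ := norm_pos_iff.2 hε
  subst hlam0 hlamm
  constructor
  · have hkey := dual_le_max S p psc hp hpsc hdec (mulVecE X.transpose ε)
    have h : dualNorm p (mulVecE X.transpose ε) / ‖ε‖ ≤
        max (dualNorm psc (restrC S (mulVecE X.transpose ε)))
          (dualNorm p (projS S (mulVecE X.transpose ε))) / ‖ε‖ := by gcongr
    rw [← max_div_div_right hεpos.le] at h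
    exact h.trans (le_max_left _ _)
  · have hkey := dual_le_max S p psc hp hpsc hdec β0
    exact hkey.trans (le_max_right _ _)

end
end

section
/- Let τ > 0 and let G : ℝ^m → ℝ^m be the proximal mapping G(u) = Prox_{τ⁻¹‖·‖}(u) = argmin_{y ∈ ℝ^m} { τ⁻¹‖y‖ + (1/2)‖y − u‖² }. If ũ ∈ ℝ^m satisfies ‖ũ‖ > 1/τ, then G is differentiable at ũ with Jacobian V = (1 − 1/(τ‖ũ‖)) I_m + ũũᵀ/(τ‖ũ‖³), and this matrix V is symmetric positive definite. -/
open scoped RealInnerProductSpace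

noncomputable section

lemma prox_formula {m : ℕ} (τ : ℝ) (hτ : 0 < τ)
    (G : EuclideanSpace ℝ (Fin m) → EuclideanSpace ℝ (Fin m))
    (hG : ∀ u y : EuclideanSpace ℝ (Fin m),
      τ⁻¹ * ‖G u‖ + 1 / 2 * ‖G u - u‖ ^ 2 ≤ τ⁻¹ * ‖y‖ + 1 / 2 * ‖y - u‖ ^ 2)
    (v : EuclideanSpace ℝ (Fin m)) (hv : 1 / τ < ‖v‖) :
    G v = (1 - 1 / (τ * ‖v‖)) • v := by
  have hvpos : 0 < ‖v‖ := lt_trans (by positivity) hv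
  set k : ℝ := 1 / (τ * ‖v‖) with hk
  have hk0 : 0 < k := by positivity
  have h1τ : 1 < τ * ‖v‖ := by
    rw [mul_comm]; exact (div_lt_iff₀ hτ).mp hv
  have hk1 : k < 1 := by
    rw [hk]; exact (div_lt_one (by positivity)).mpr h1τ
  have hkN : k * ‖v‖ = τ⁻¹ := by
    rw [hk]; field_simp
  set c : ℝ := 1 - k with hc
  have hc0 : 0 < c := by linarith
  set y0 : EuclideanSpace ℝ (Fin m) := c • v with hy0
  have hny0 : ‖y0‖ = c * ‖v‖ := by
    rw [hy0, norm_smul, Real.norm_eq_abs, abs_of_pos hc0]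
  have hy0v : y0 - v = (-k) • v := by
    rw [hy0, hc]; module
  have hmin : ∀ y : EuclideanSpace ℝ (Fin m),
      τ⁻¹ * ‖y0‖ + 1 / 2 * ‖y0 - v‖ ^ 2 ≤ τ⁻¹ * ‖y‖ + 1 / 2 * ‖y - v‖ ^ 2 := by
    intro y
    have hdecomp : ‖y - v‖ ^ 2 = ‖y - y0‖ ^ 2 + 2 * ⟪y - y0, y0 - v⟫ + ‖y0 - v‖ ^ 2 := by
      have := norm_add_sq_real (y - y0) (y0 - v)
      simpa [sub_add_sub_cancel] using this
    have hinner : ⟪y - y0, y0 - v⟫ = -k * ⟪y, v⟫ + k * c * ‖v‖ ^ 2 := by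
      rw [hy0v, real_inner_smul_right, inner_sub_left, hy0, real_inner_smul_left,
        real_inner_self_eq_norm_sq]
      ring
    have hCS : ⟪y, v⟫ ≤ ‖y‖ * ‖v‖ := real_inner_le_norm y v
    have hCSk : k * ⟪y, v⟫ ≤ k * (‖y‖ * ‖v‖) := mul_le_mul_of_nonneg_left hCS hk0.le
    have h1 : k * (‖y‖ * ‖v‖) = τ⁻¹ * ‖y‖ := by rw [← hkN]; ring
    have h2 : k * c * ‖v‖ ^ 2 = τ⁻¹ * (c * ‖v‖) := by rw [← hkN]; ring
    rw [hny0]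
    clear_value k c y0
    linarith [sq_nonneg ‖y - y0‖]
  have heq : τ⁻¹ * ‖G v‖ + 1 / 2 * ‖G v - v‖ ^ 2 = τ⁻¹ * ‖y0‖ + 1 / 2 * ‖y0 - v‖ ^ 2 :=
    le_antisymm (hG v y0) (hmin (G v))
  -- midpoint argument
  set z : EuclideanSpace ℝ (Fin m) := (2⁻¹ : ℝ) • (G v + y0) with hz
  have hznorm : ‖z‖ ≤ 2⁻¹ * (‖G v‖ + ‖y0‖) := by
    rw [hz, norm_smul]
    simp only [Real.norm_eq_abs]
    rw [abs_of_pos (by norm_num : (0:ℝ) < 2⁻¹)]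
    exact mul_le_mul_of_nonneg_left (norm_add_le _ _) (by norm_num)
  have hzv : ‖z - v‖ ^ 2 = 2⁻¹ * ‖G v - v‖ ^ 2 + 2⁻¹ * ‖y0 - v‖ ^ 2
      - 4⁻¹ * ‖G v - y0‖ ^ 2 := by
    have hzv' : z - v = (2⁻¹ : ℝ) • ((G v - v) + (y0 - v)) := by
      rw [hz]; module
    have h1 := norm_add_sq_real (G v - v) (y0 - v)
    have h2 := norm_sub_sq_real (G v - v) (y0 - v)
    have h3 : (G v - v) - (y0 - v) = G v - y0 := by abel
    rw [h3] at h2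
    rw [hzv', norm_smul]
    simp only [Real.norm_eq_abs]
    rw [abs_of_pos (by norm_num : (0:ℝ) < 2⁻¹), mul_pow]
    linarith [h1, h2]
  clear_value k c y0 z
  have hzle := hG v z
  have hτi : 0 < τ⁻¹ := by positivity
  have hz1 : τ⁻¹ * ‖z‖ ≤ τ⁻¹ * (2⁻¹ * (‖G v‖ + ‖y0‖)) :=
    mul_le_mul_of_nonneg_left hznorm hτi.le
  have hd2 : ‖G v - y0‖ ^ 2 ≤ 0 := by linarith
  have hzero : G v - y0 = 0 := by
    have hn : ‖G v - y0‖ = 0 := by nlinarith [norm_nonneg (G v - y0)]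
    exact norm_eq_zero.mp hn
  have := sub_eq_zero.mp hzero
  rw [this, hy0, hc, hk]

/-- the proximal mapping of `τ⁻¹‖·‖` is differentiable at any point
`ũ` with `‖ũ‖ > 1/τ`, with symmetric positive definite Jacobian
`V = (1 − 1/(τ‖ũ‖)) I + ũũᵀ/(τ‖ũ‖³)`. -/

theorem prox_norm_differentiable_posdef {m : ℕ} (τ : ℝ) (hτ : 0 < τ)
    (G : EuclideanSpace ℝ (Fin m) → EuclideanSpace ℝ (Fin m))
    (hG : ∀ u y : EuclideanSpace ℝ (Fin m),
      τ⁻¹ * ‖G u‖ + 1 / 2 * ‖G u - u‖ ^ 2 ≤ τ⁻¹ * ‖y‖ + 1 / 2 * ‖y - u‖ ^ 2)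
    (u : EuclideanSpace ℝ (Fin m)) (hu : 1 / τ < ‖u‖)
    (V : EuclideanSpace ℝ (Fin m) →L[ℝ] EuclideanSpace ℝ (Fin m))
    (hV : V = (1 - 1 / (τ * ‖u‖)) • ContinuousLinearMap.id ℝ (EuclideanSpace ℝ (Fin m)) +
      (1 / (τ * ‖u‖ ^ 3)) • ((innerSL ℝ u).smulRight u)) :
    HasFDerivAt G V u ∧ (∀ v w : EuclideanSpace ℝ (Fin m), ⟪V v, w⟫ = ⟪v, V w⟫) ∧
      (∀ v : EuclideanSpace ℝ (Fin m), v ≠ 0 → 0 < ⟪V v, v⟫) := by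
  have hupos : 0 < ‖u‖ := lt_trans (by positivity) hu
  have h1τ : 1 < τ * ‖u‖ := by rw [mul_comm]; exact (div_lt_iff₀ hτ).mp hu
  refine ⟨?_, ?_, ?_⟩
  · -- differentiability
    have hgd : HasFDerivAt (fun v : EuclideanSpace ℝ (Fin m) =>
        (1 - 1 / (τ * ‖v‖)) • v) V u := by
      have hq : HasFDerivAt (fun v : EuclideanSpace ℝ (Fin m) => ‖v‖ ^ 2)
          (2 • innerSL ℝ u) u := (hasStrictFDerivAt_norm_sq u).hasFDerivAt
      have hsq : HasDerivAt Real.sqrt (1 / (2 * Real.sqrt (‖u‖ ^ 2))) (‖u‖ ^ 2) :=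
        Real.hasDerivAt_sqrt (by positivity)
      have hn' : HasFDerivAt (fun v : EuclideanSpace ℝ (Fin m) => Real.sqrt (‖v‖ ^ 2))
          ((1 / (2 * Real.sqrt (‖u‖ ^ 2))) • (2 • innerSL ℝ u)) u :=
        hsq.comp_hasFDerivAt u hq
      have hfun : (fun v : EuclideanSpace ℝ (Fin m) => Real.sqrt (‖v‖ ^ 2)) =
          fun v => ‖v‖ := funext fun v => Real.sqrt_sq (norm_nonneg v)
      rw [hfun] at hn'
      have hiv : HasDerivAt (fun y : ℝ => y⁻¹) (-(‖u‖ ^ 2)⁻¹) ‖u‖ :=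
        hasDerivAt_inv (ne_of_gt hupos)
      have hinv : HasFDerivAt (fun v : EuclideanSpace ℝ (Fin m) => (‖v‖)⁻¹)
          ((-(‖u‖ ^ 2)⁻¹) • ((1 / (2 * Real.sqrt (‖u‖ ^ 2))) • (2 • innerSL ℝ u))) u :=
        hiv.comp_hasFDerivAt u hn'
      have hφ : HasFDerivAt (fun v : EuclideanSpace ℝ (Fin m) => 1 - 1 / (τ * ‖v‖))
          (-(τ⁻¹ • ((-(‖u‖ ^ 2)⁻¹) •
            ((1 / (2 * Real.sqrt (‖u‖ ^ 2))) • (2 • innerSL ℝ u))))) u := by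
        have h1 := hinv.const_mul τ⁻¹
        have h2 := h1.const_sub 1
        have hf : (fun v : EuclideanSpace ℝ (Fin m) => 1 - 1 / (τ * ‖v‖)) =
            fun x => 1 - τ⁻¹ * ‖x‖⁻¹ := funext fun v => by rw [one_div, mul_inv]
        rw [hf]; exact h2
      have hg := hφ.smul (hasFDerivAt_id u)
      refine hg.congr_fderiv ?_
      symm
      rw [hV]
      refine ContinuousLinearMap.ext fun w => ?_
      simp only [ContinuousLinearMap.add_apply, ContinuousLinearMap.smul_apply,
        ContinuousLinearMap.id_apply, ContinuousLinearMap.smulRight_apply, innerSL_apply_apply,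
        ContinuousLinearMap.neg_apply, ContinuousLinearMap.coe_smul', Pi.smul_apply, id_eq,
        ← Nat.cast_smul_eq_nsmul ℝ, Nat.cast_ofNat, Real.sqrt_sq (norm_nonneg u), smul_smul]
      match_scalars
      · field_simp
      · field_simp
        have h' : τ * ‖u‖ ^ 3 * τ⁻¹ * ‖u‖⁻¹ ^ 3 = 1 := by
          rw [inv_pow]; field_simp
        linear_combination (-⟪u, w⟫) * h'
    have hopen : IsOpen {v : EuclideanSpace ℝ (Fin m) | 1 / τ < ‖v‖} :=
      isOpen_lt continuous_const continuous_norm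
    have hev : (fun v : EuclideanSpace ℝ (Fin m) => (1 - 1 / (τ * ‖v‖)) • v)
        =ᶠ[nhds u] G := by
      filter_upwards [hopen.mem_nhds hu] with v hv
      exact (prox_formula τ hτ G hG v hv).symm
    exact hgd.congr_of_eventuallyEq hev.symm
  · -- symmetry
    intro v w
    rw [hV]
    simp only [ContinuousLinearMap.add_apply, ContinuousLinearMap.smul_apply,
      ContinuousLinearMap.id_apply, ContinuousLinearMap.smulRight_apply, innerSL_apply_apply,
      inner_add_left, inner_add_right, real_inner_smul_left, real_inner_smul_right]
    rw [real_inner_comm v u]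
    ring
  · -- positive definiteness
    intro v hv0
    rw [hV]
    simp only [ContinuousLinearMap.add_apply, ContinuousLinearMap.smul_apply,
      ContinuousLinearMap.id_apply, ContinuousLinearMap.smulRight_apply, innerSL_apply_apply,
      inner_add_left, real_inner_smul_left]
    have h1 : 0 < 1 - 1 / (τ * ‖u‖) := by
      rw [sub_pos]; exact (div_lt_one (by positivity)).mpr h1τ
    have h2 : (0:ℝ) < 1 / (τ * ‖u‖ ^ 3) := by positivity
    have h3 : (0:ℝ) < ⟪v, v⟫ := by
      rw [real_inner_self_eq_norm_sq]
      exact pow_pos (norm_pos_iff.mpr hv0) 2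
    nlinarith [mul_pos h1 h3, mul_nonneg h2.le (mul_self_nonneg ⟪u, v⟫)]
end
end

section
/- Let X ∈ ℝ^{m×n}, b ∈ ℝ^m, λ > 0, let p₁ be a norm on ℝⁿ, and let p₂ : ℝⁿ → ℝ be a convex function. For σ > 0, τ > 0 define h̄(σ,τ) = inf_{β ∈ ℝⁿ} { ‖Xβ − b‖ + λ p₁(β) − p₂(0) + (σ/2)‖β‖² + (τ/2)‖Xβ − b‖² }. Then lim_{(σ,τ)→(0⁺,0⁺)} h̄(σ,τ) = inf_{β ∈ ℝⁿ} { ‖Xβ − b‖ + λ p₁(β) } − p₂(0). -/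
open scoped RealInnerProductSpace

noncomputable section

/-- convergence of the optimal value of the proximally regularized
problem to the optimal value of the original problem (shifted by `p₂(0)`)
as the proximal parameters tend to `0⁺`. -/
theorem prox_value_convergence {m n : ℕ} (X : Matrix (Fin m) (Fin n) ℝ)
    (b : EuclideanSpace ℝ (Fin m)) (lam : ℝ) (hlam : 0 < lam)
    (p1 : EuclideanSpace ℝ (Fin n) → ℝ) (hp1 : IsNorm p1)
    (p2 : EuclideanSpace ℝ (Fin n) → ℝ) (hp2conv : ConvexOn ℝ Set.univ p2)
    (hbar : ℝ → ℝ → ℝ)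
    (hhbar : ∀ σ τ : ℝ, hbar σ τ = ⨅ β : EuclideanSpace ℝ (Fin n),
      (‖mulVecE X β - b‖ + lam * p1 β - p2 0 + σ / 2 * ‖β‖ ^ 2 +
        τ / 2 * ‖mulVecE X β - b‖ ^ 2)) :
    Filter.Tendsto (fun q : ℝ × ℝ => hbar q.1 q.2)
      (nhdsWithin (0, 0) (Set.Ioi (0 : ℝ) ×ˢ Set.Ioi (0 : ℝ)))
      (nhds ((⨅ β : EuclideanSpace ℝ (Fin n), (‖mulVecE X β - b‖ + lam * p1 β)) -
        p2 0)) := by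

  have hp1nn : ∀ x, 0 ≤ p1 x := by
    intro x
    have h0 : p1 0 = 0 := (hp1.2.2 0).mpr rfl
    have hneg : p1 (-x) = p1 x := by
      have := hp1.2.1 (-1) x
      simpa using this
    have h := hp1.1 x (-x)
    rw [add_neg_cancel, h0, hneg] at h
    linarith
  set f : EuclideanSpace ℝ (Fin n) → ℝ := fun β => ‖mulVecE X β - b‖ + lam * p1 β with hf
  have hfnn : ∀ β, 0 ≤ f β := fun β =>
    add_nonneg (norm_nonneg _) (mul_nonneg hlam.le (hp1nn β))
  have hbdd : BddBelow (Set.range f) := ⟨0, by rintro _ ⟨β, rfl⟩; exact hfnn β⟩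
  set L : ℝ := ⨅ β, f β with hL
  rw [Metric.tendsto_nhdsWithin_nhds]
  intro ε hε
  have hεhalf : L < L + ε / 2 := by linarith
  obtain ⟨β₀, hβ₀⟩ := exists_lt_of_ciInf_lt hεhalf
  set A : ℝ := ‖β₀‖ ^ 2 with hA
  set B : ℝ := ‖mulVecE X β₀ - b‖ ^ 2 with hB
  have hAnn : 0 ≤ A := sq_nonneg _
  have hBnn : 0 ≤ B := sq_nonneg _
  refine ⟨ε / (A + B + 1), by positivity, ?_⟩
  rintro ⟨σ, τ⟩ ⟨hσ, hτ⟩ hdist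
  simp only [Set.mem_Ioi] at hσ hτ
  rw [Prod.dist_eq] at hdist
  have hσδ : σ < ε / (A + B + 1) := by
    have := (max_lt_iff.mp hdist).1
    rw [Real.dist_eq, abs_lt] at this
    linarith [this.2]
  have hτδ : τ < ε / (A + B + 1) := by
    have := (max_lt_iff.mp hdist).2
    rw [Real.dist_eq, abs_lt] at this
    linarith [this.2]
  have hlowβ : ∀ β : EuclideanSpace ℝ (Fin n),
      L - p2 0 ≤ f β - p2 0 + σ / 2 * ‖β‖ ^ 2 + τ / 2 * ‖mulVecE X β - b‖ ^ 2 := by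
    intro β
    have h1 : L ≤ ‖mulVecE X β - b‖ + lam * p1 β := ciInf_le hbdd β
    have h1' : L ≤ f β := h1
    have h2 : 0 ≤ σ / 2 * ‖β‖ ^ 2 := by positivity
    have h3 : 0 ≤ τ / 2 * ‖mulVecE X β - b‖ ^ 2 := by positivity
    linarith
  have hbdd2 : BddBelow (Set.range (fun β : EuclideanSpace ℝ (Fin n) =>
      ‖mulVecE X β - b‖ + lam * p1 β - p2 0 + σ / 2 * ‖β‖ ^ 2 +
        τ / 2 * ‖mulVecE X β - b‖ ^ 2)) :=
    ⟨L - p2 0, by rintro _ ⟨β, rfl⟩; exact hlowβ β⟩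
  have hlow : L - p2 0 ≤ hbar σ τ := by
    rw [hhbar]
    exact le_ciInf hlowβ
  have hup : hbar σ τ ≤ f β₀ - p2 0 + σ / 2 * A + τ / 2 * B := by
    rw [hhbar]
    exact ciInf_le hbdd2 β₀
  have hsmall : σ / 2 * A + τ / 2 * B < ε / 2 := by
    have h1 : σ / 2 * A ≤ (ε / (A + B + 1)) / 2 * A := by
      apply mul_le_mul_of_nonneg_right (by linarith) hAnn
    have h2 : τ / 2 * B ≤ (ε / (A + B + 1)) / 2 * B := by
      apply mul_le_mul_of_nonneg_right (by linarith) hBnn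
    have hd : ε / (A + B + 1) * (A + B + 1) = ε := div_mul_cancel₀ _ (by positivity)
    have hδpos : 0 < ε / (A + B + 1) := by positivity
    have h3 : (ε / (A + B + 1)) / 2 * A + (ε / (A + B + 1)) / 2 * B < ε / 2 := by
      nlinarith
    linarith
  rw [Real.dist_eq, abs_lt]
  constructor <;> [linarith; linarith]
end
end

section
/- Let X ∈ ℝ^{m×n}, b ∈ ℝ^m, λ > 0, let p₁ be a norm on ℝⁿ, and let p₂ : ℝⁿ → ℝ be a convex continuously differentiable function. Define g(β) = ‖Xβ − b‖ + λ p₁(β) − p₂(β) and assume g is bounded below on ℝⁿ. Let {σ^k} and {τ^k} be sequences of positive reals with σ^k → σ^∞ > 0 and τ^k → τ^∞ ≥ 0. Let {β^k} ⊂ ℝⁿ and {δ^k} ⊂ ℝⁿ be sequences such that for every k: β^{k+1} is a global minimizer over ℝⁿ of β ↦ h_k(β) + ⟨δ^k, β − β^k⟩, where h_k(β) = ‖Xβ − b‖ + λ p₁(β) − p₂(β^k) − ⟨∇p₂(β^k), β − β^k⟩ + (σ^k/2)‖β − β^k‖² + (τ^k/2)‖Xβ − Xβ^k‖²; and ‖δ^k‖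 ≤ (σ^k/4)‖β^{k+1} − β^k‖ + τ^k‖X(β^{k+1} − β^k)‖²/(2‖β^{k+1} − β^k‖) if β^{k+1} ≠ β^k, with δ^k = 0 if β^{k+1} = β^k. Then every cluster point β^∞ of {β^k} is a d-stationary point of g, i.e., the one-sided directional derivative g'(β^∞; d) is nonnegative for every d ∈ ℝⁿ. -/
open scoped RealInnerProductSpace

noncomputable section

open Filter Set Topology

section Aux


variable {m n : ℕ}

lemma mulVecE_add (X : Matrix (Fin m) (Fin n) ℝ) (x y : EuclideanSpace ℝ (Fin n)) :
    mulVecE X (x + y) = mulVecE X x + mulVecE X y := by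
  ext i
  simp [mulVecE, Matrix.mulVec_add]

lemma mulVecE_smul (X : Matrix (Fin m) (Fin n) ℝ) (c : ℝ) (x : EuclideanSpace ℝ (Fin n)) :
    mulVecE X (c • x) = c • mulVecE X x := by
  ext i
  simp [mulVecE, Matrix.mulVec_smul]

def mulVecCLM (X : Matrix (Fin m) (Fin n) ℝ) :
    EuclideanSpace ℝ (Fin n) →L[ℝ] EuclideanSpace ℝ (Fin m) :=
  LinearMap.toContinuousLinearMap
    { toFun := mulVecE X
      map_add' := mulVecE_add X
      map_smul' := mulVecE_smul X }

@[simp] lemma mulVecCLM_apply (X : Matrix (Fin m) (Fin n) ℝ) (v : EuclideanSpace ℝ (Fin n)) :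
    mulVecCLM X v = mulVecE X v := rfl

lemma mulVecE_sub (X : Matrix (Fin m) (Fin n) ℝ) (x y : EuclideanSpace ℝ (Fin n)) :
    mulVecE X (x - y) = mulVecE X x - mulVecE X y := by
  have := (mulVecCLM X).map_sub x y
  simpa using this

lemma mulVecE_cont (X : Matrix (Fin m) (Fin n) ℝ) : Continuous (mulVecE X) := by
  have := (mulVecCLM X).continuous
  exact this

lemma IsNorm.zero' {p1 : EuclideanSpace ℝ (Fin n) → ℝ} (h : IsNorm p1) : p1 0 = 0 :=
  (h.2.2 0).mpr rfl

lemma IsNorm.convexOn' {p1 : EuclideanSpace ℝ (Fin n) → ℝ} (h : IsNorm p1) :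
    ConvexOn ℝ Set.univ p1 := by
  refine ⟨convex_univ, fun x _ y _ a c ha hc hac => ?_⟩
  calc p1 (a • x + c • y) ≤ p1 (a • x) + p1 (c • y) := h.1 _ _
    _ = a • p1 x + c • p1 y := by
        rw [h.2.1, h.2.1, abs_of_nonneg ha, abs_of_nonneg hc]; simp [smul_eq_mul]

lemma IsNorm.continuous' {p1 : EuclideanSpace ℝ (Fin n) → ℝ} (h : IsNorm p1) :
    Continuous p1 := by
  rw [← continuousOn_univ]
  exact ConvexOn.continuousOn isOpen_univ h.convexOn'

lemma grad_ineq {N : ℕ} {f : EuclideanSpace ℝ (Fin N) → ℝ} (hconv : ConvexOn ℝ Set.univ f)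
    (hsm : ContDiff ℝ 1 f) (x y : EuclideanSpace ℝ (Fin N)) :
    f x + ⟪gradient f x, y - x⟫ ≤ f y := by
  set ψ : ℝ → ℝ := fun t => f (x + t • (y - x)) with hψ
  have hline : ∀ t : ℝ, (AffineMap.lineMap x y : ℝ →ᵃ[ℝ] EuclideanSpace ℝ (Fin N)) t
      = x + t • (y - x) := by
    intro t
    simp [AffineMap.lineMap_apply, add_comm]
  have hψconv : ConvexOn ℝ Set.univ ψ := by
    have h1 := hconv.comp_affineMap (AffineMap.lineMap x y : ℝ →ᵃ[ℝ] EuclideanSpace ℝ (Fin N))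
    rw [Set.preimage_univ] at h1
    have h2 : (f ∘ (AffineMap.lineMap x y : ℝ →ᵃ[ℝ] EuclideanSpace ℝ (Fin N))) = ψ := by
      funext t; simp [Function.comp, hline t, hψ]
    rwa [h2] at h1
  have hc : HasDerivAt (fun t : ℝ => x + t • (y - x)) (y - x) 0 := by
    simpa using ((hasDerivAt_id (0 : ℝ)).smul_const (y - x)).const_add x
  have hf' : HasFDerivAt f (fderiv ℝ f x) ((fun t : ℝ => x + t • (y - x)) 0) := by
    simpa using ((hsm.differentiable one_ne_zero) x).hasFDerivAt
  have hd : HasDerivAt ψ ((fderiv ℝ f x) (y - x)) 0 := hf'.comp_hasDerivAt 0 hc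
  have hs := hψconv.le_slope_of_hasDerivWithinAt_Ioi (Set.mem_univ 0) (Set.mem_univ 1)
    one_pos hd.hasDerivWithinAt
  have hslope : slope ψ 0 1 = f y - f x := by
    rw [slope_def_field]; simp [hψ]
  have hgr : ⟪gradient f x, y - x⟫ = (fderiv ℝ f x) (y - x) :=
    InnerProductSpace.toDual_symm_apply
  rw [hslope] at hs
  rw [hgr]
  linarith

lemma gradient_cont {N : ℕ} {f : EuclideanSpace ℝ (Fin N) → ℝ} (hsm : ContDiff ℝ 1 f) :
    Continuous (fun x => gradient f x) := by
  show Continuous (fun x => (InnerProductSpace.toDual ℝ (EuclideanSpace ℝ (Fin N))).symm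
    (fderiv ℝ f x))
  exact (LinearIsometryEquiv.continuous _).comp (hsm.continuous_fderiv one_ne_zero)


lemma mulVecE_bound {m n : ℕ} (X : Matrix (Fin m) (Fin n) ℝ) :
    ∃ C : ℝ, 0 ≤ C ∧ ∀ z, ‖mulVecE X z‖ ≤ C * ‖z‖ :=
  ⟨‖mulVecCLM X‖, norm_nonneg _, fun z => by simpa using (mulVecCLM X).le_opNorm z⟩

lemma GConvex {m n : ℕ} (X : Matrix (Fin m) (Fin n) ℝ) (b : EuclideanSpace ℝ (Fin m))
    (lam : ℝ) (hlam : 0 ≤ lam) (p1 : EuclideanSpace ℝ (Fin n) → ℝ)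
    (hp1add : ∀ x y, p1 (x + y) ≤ p1 x + p1 y)
    (hp1smul : ∀ (c : ℝ) (x), p1 (c • x) = |c| * p1 x) :
    ConvexOn ℝ Set.univ (fun y => ‖mulVecE X y - b‖ + lam * p1 y) := by
  refine ⟨convex_univ, fun x _ y _ a c ha hc hac => ?_⟩
  have e : mulVecE X (a • x + c • y) - b = a • (mulVecE X x - b) + c • (mulVecE X y - b) := by
    rw [mulVecE_add, mulVecE_smul, mulVecE_smul, smul_sub, smul_sub]
    have : a • b + c • b = b := by rw [← add_smul, hac, one_smul]
    conv_lhs => rw [← this]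
    abel
  have hn : ‖mulVecE X (a • x + c • y) - b‖ ≤ a * ‖mulVecE X x - b‖ + c * ‖mulVecE X y - b‖ := by
    rw [e]
    calc ‖a • (mulVecE X x - b) + c • (mulVecE X y - b)‖
        ≤ ‖a • (mulVecE X x - b)‖ + ‖c • (mulVecE X y - b)‖ := norm_add_le _ _
      _ = a * ‖mulVecE X x - b‖ + c * ‖mulVecE X y - b‖ := by
          rw [norm_smul, norm_smul, Real.norm_eq_abs, Real.norm_eq_abs,
            abs_of_nonneg ha, abs_of_nonneg hc]
  have hp : p1 (a • x + c • y) ≤ a * p1 x + c * p1 y := by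
    calc p1 (a • x + c • y) ≤ p1 (a • x) + p1 (c • y) := hp1add _ _
      _ = a * p1 x + c * p1 y := by
          rw [hp1smul, hp1smul, abs_of_nonneg ha, abs_of_nonneg hc]
  have := mul_le_mul_of_nonneg_left hp hlam
  simp only [smul_eq_mul]
  nlinarith

lemma dstat_of_min {m n : ℕ} (X : Matrix (Fin m) (Fin n) ℝ)
    (b : EuclideanSpace ℝ (Fin m)) (lam : ℝ) (hlam : 0 < lam)
    (p1 : EuclideanSpace ℝ (Fin n) → ℝ)
    (hp1add : ∀ x y, p1 (x + y) ≤ p1 x + p1 y)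
    (hp1smul : ∀ (c : ℝ) (x), p1 (c • x) = |c| * p1 x)
    (p2 : EuclideanSpace ℝ (Fin n) → ℝ) (hp2smooth : ContDiff ℝ 1 p2)
    (g : EuclideanSpace ℝ (Fin n) → ℝ)
    (hg : ∀ β, g β = ‖mulVecE X β - b‖ + lam * p1 β - p2 β)
    (σinf τinf : ℝ) (hσinf : 0 ≤ σinf) (hτinf : 0 ≤ τinf)
    (βinf : EuclideanSpace ℝ (Fin n))
    (hminf : ∀ x, g βinf ≤ ‖mulVecE X x - b‖ + lam * p1 x - p2 βinf -
      ⟪gradient p2 βinf, x - βinf⟫ + σinf / 2 * ‖x - βinf‖ ^ 2 +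
      τinf / 2 * ‖mulVecE X x - mulVecE X βinf‖ ^ 2) :
    ∀ d : EuclideanSpace ℝ (Fin n), ∃ L : ℝ, 0 ≤ L ∧
      Filter.Tendsto (fun t : ℝ => (g (βinf + t • d) - g βinf) / t)
        (nhdsWithin 0 (Set.Ioi 0)) (nhds L) := by
  intro d
  set G : EuclideanSpace ℝ (Fin n) → ℝ := fun y => ‖mulVecE X y - b‖ + lam * p1 y with hG
  have hGconv : ConvexOn ℝ Set.univ G := GConvex X b lam hlam.le p1 hp1add hp1smul
  have hGg : ∀ y, g y = G y - p2 y := fun y => by rw [hg, hG]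
  set φG : ℝ → ℝ := fun t => G (βinf + t • d) with hφG
  have hφGconv : ConvexOn ℝ Set.univ φG := by
    have h1 := hGconv.comp_affineMap
      (AffineMap.lineMap βinf (βinf + d) : ℝ →ᵃ[ℝ] EuclideanSpace ℝ (Fin n))
    rw [Set.preimage_univ] at h1
    have h2 : (G ∘ (AffineMap.lineMap βinf (βinf + d) : ℝ →ᵃ[ℝ] EuclideanSpace ℝ (Fin n)))
        = φG := by
      funext t
      simp [Function.comp, AffineMap.lineMap_apply, hφG, add_sub_cancel_left, add_comm]
    rwa [h2] at h1
  set q : ℝ → ℝ := slope φG 0 with hq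
  have hsm := hφGconv.slope_mono (Set.mem_univ 0)
  have hmem : ∀ t : ℝ, t ≠ 0 → t ∈ Set.univ \ {(0:ℝ)} := fun t ht =>
    ⟨Set.mem_univ t, by simpa using ht⟩
  have hqmono : MonotoneOn q (Set.Ioi 0) := fun s hs t ht hst =>
    hsm (hmem s hs.ne') (hmem t ht.ne') hst
  have hqbdd : BddBelow (q '' Set.Ioi 0) := by
    refine ⟨q (-1), fun y hy => ?_⟩
    obtain ⟨t, ht, rfl⟩ := hy
    exact hsm (hmem (-1) (by norm_num)) (hmem t ht.ne') (by linarith [Set.mem_Ioi.mp ht])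
  have hqtend : Tendsto q (nhdsWithin 0 (Set.Ioi 0)) (nhds (sInf (q '' Set.Ioi 0))) :=
    MonotoneOn.tendsto_nhdsGT hqmono hqbdd
  set L1 : ℝ := sInf (q '' Set.Ioi 0) with hL1
  -- derivative of ψ = p2 along the line
  set ψ : ℝ → ℝ := fun t => p2 (βinf + t • d) with hψ
  have hc : HasDerivAt (fun t : ℝ => βinf + t • d) d 0 := by
    simpa using ((hasDerivAt_id (0 : ℝ)).smul_const d).const_add βinf
  have hf' : HasFDerivAt p2 (fderiv ℝ p2 βinf) ((fun t : ℝ => βinf + t • d) 0) := by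
    simpa using ((hp2smooth.differentiable one_ne_zero) βinf).hasFDerivAt
  have hd : HasDerivAt ψ ((fderiv ℝ p2 βinf) d) 0 := hf'.comp_hasDerivAt 0 hc
  have hgr : ⟪gradient p2 βinf, d⟫ = (fderiv ℝ p2 βinf) d :=
    InnerProductSpace.toDual_symm_apply
  have hψslope : Tendsto (slope ψ 0) (nhdsWithin 0 (Set.Ioi 0))
      (nhds ((fderiv ℝ p2 βinf) d)) := by
    have h1 := hasDerivAt_iff_tendsto_slope.mp hd
    exact h1.mono_left (nhdsWithin_mono 0 (fun t ht => Set.mem_compl_singleton_iff.mpr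
      (Set.mem_Ioi.mp ht).ne'))
  refine ⟨L1 - ⟪gradient p2 βinf, d⟫, ?_, ?_⟩
  · -- nonnegativity
    set K : ℝ := σinf / 2 * ‖d‖ ^ 2 + τinf / 2 * ‖mulVecE X d‖ ^ 2 with hK
    have key : ∀ t ∈ Set.Ioi (0:ℝ), ⟪gradient p2 βinf, d⟫ ≤ q t + t * K := by
      intro t ht
      rw [Set.mem_Ioi] at ht
      have h := hminf (βinf + t • d)
      have e1 : βinf + t • d - βinf = t • d := add_sub_cancel_left βinf _
      have e2 : mulVecE X (βinf + t • d) - mulVecE X βinf = t • mulVecE X d := by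
        rw [← mulVecE_sub, e1, mulVecE_smul]
      have e3 : ‖t • d‖ ^ 2 = t ^ 2 * ‖d‖ ^ 2 := by
        rw [norm_smul, Real.norm_eq_abs, mul_pow, sq_abs]
      have e4 : ‖t • mulVecE X d‖ ^ 2 = t ^ 2 * ‖mulVecE X d‖ ^ 2 := by
        rw [norm_smul, Real.norm_eq_abs, mul_pow, sq_abs]
      have e5 : ⟪gradient p2 βinf, t • d⟫ = t * ⟪gradient p2 βinf, d⟫ :=
        real_inner_smul_right _ _ _
      rw [e1, e2, e3, e4, e5, hGg βinf] at h
      have hGfold : ‖mulVecE X (βinf + t • d) - b‖ + lam * p1 (βinf + t • d) = φG t := rfl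
      rw [hGfold] at h
      have hφG0 : φG 0 = G βinf := by simp [hφG]
      have hqt : q t = (φG t - φG 0) / t := by rw [hq, slope_def_field, sub_zero]
      have h2 : t * ⟪gradient p2 βinf, d⟫ ≤ (φG t - φG 0) + t ^ 2 * K := by
        rw [hφG0, hK]; nlinarith [h]
      have h3 : ⟪gradient p2 βinf, d⟫ - t * K ≤ (φG t - φG 0) / t := by
        rw [le_div_iff₀ ht]; nlinarith [h2]
      rw [hqt]; linarith
    have hid : Tendsto (fun t : ℝ => t) (nhdsWithin 0 (Set.Ioi 0)) (nhds 0) :=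
      tendsto_id.mono_right nhdsWithin_le_nhds
    have hlim2 : Tendsto (fun t => q t + t * K) (nhdsWithin 0 (Set.Ioi 0))
        (nhds (L1 + 0 * K)) := hqtend.add (hid.mul_const K)
    have hle : ⟪gradient p2 βinf, d⟫ ≤ L1 + 0 * K :=
      ge_of_tendsto hlim2 (eventually_mem_nhdsWithin.mono key)
    simp only [zero_mul, add_zero] at hle
    linarith
  · -- the limit
    have hFeq : (fun t : ℝ => q t - slope ψ 0 t) =ᶠ[nhdsWithin 0 (Set.Ioi 0)]
        (fun t : ℝ => (g (βinf + t • d) - g βinf) / t) := by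
      filter_upwards [eventually_mem_nhdsWithin] with t ht
      rw [Set.mem_Ioi] at ht
      have hqt : q t = (φG t - φG 0) / t := by rw [hq, slope_def_field, sub_zero]
      have hψt : slope ψ 0 t = (ψ t - ψ 0) / t := by rw [slope_def_field, sub_zero]
      have hg1 : g (βinf + t • d) = φG t - ψ t := hGg _
      have hg2 : g βinf = φG 0 - ψ 0 := by
        have := hGg βinf
        simpa [hφG, hψ] using this
      rw [hqt, hψt, hg1, hg2]
      field_simp
      ring
    have := (hqtend.sub hψslope).congr' hFeq
    rwa [← hgr] at this

end Aux

/-- every cluster point of the sequence generated by the inexact PMM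
algorithm is a d-stationary point of `g`. -/
theorem pmm_cluster_point_dStationary {m n : ℕ} (X : Matrix (Fin m) (Fin n) ℝ)
    (b : EuclideanSpace ℝ (Fin m)) (lam : ℝ) (hlam : 0 < lam)
    (p1 : EuclideanSpace ℝ (Fin n) → ℝ) (hp1 : IsNorm p1)
    (p2 : EuclideanSpace ℝ (Fin n) → ℝ) (hp2conv : ConvexOn ℝ Set.univ p2)
    (hp2smooth : ContDiff ℝ 1 p2)
    (g : EuclideanSpace ℝ (Fin n) → ℝ)
    (hg : ∀ β, g β = ‖mulVecE X β - b‖ + lam * p1 β - p2 β)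
    (hgbdd : BddBelow (Set.range g))
    (σs τs : ℕ → ℝ) (hσpos : ∀ k, 0 < σs k) (hτpos : ∀ k, 0 < τs k)
    (σinf τinf : ℝ) (hσinf : 0 < σinf) (hτinf : 0 ≤ τinf)
    (hσtend : Filter.Tendsto σs Filter.atTop (nhds σinf))
    (hτtend : Filter.Tendsto τs Filter.atTop (nhds τinf))
    (β δ : ℕ → EuclideanSpace ℝ (Fin n))
    (hk : ℕ → EuclideanSpace ℝ (Fin n) → ℝ)
    (hhk : ∀ (k : ℕ) (x : EuclideanSpace ℝ (Fin n)),
      hk k x = ‖mulVecE X x - b‖ + lam * p1 x - p2 (β k) -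
        ⟪gradient p2 (β k), x - β k⟫ + σs k / 2 * ‖x - β k‖ ^ 2 +
        τs k / 2 * ‖mulVecE X x - mulVecE X (β k)‖ ^ 2)
    (hmin : ∀ (k : ℕ) (x : EuclideanSpace ℝ (Fin n)),
      hk k (β (k + 1)) + ⟪δ k, β (k + 1) - β k⟫ ≤ hk k x + ⟪δ k, x - β k⟫)
    (hδbound : ∀ k : ℕ, β (k + 1) ≠ β k →
      ‖δ k‖ ≤ σs k / 4 * ‖β (k + 1) - β k‖ +
        τs k * ‖mulVecE X (β (k + 1) - β k)‖ ^ 2 / (2 * ‖β (k + 1) - β k‖))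
    (hδzero : ∀ k : ℕ, β (k + 1) = β k → δ k = 0)
    (βinf : EuclideanSpace ℝ (Fin n)) (hcluster : MapClusterPt βinf Filter.atTop β) :
    ∀ d : EuclideanSpace ℝ (Fin n), ∃ L : ℝ, 0 ≤ L ∧
      Filter.Tendsto (fun t : ℝ => (g (βinf + t • d) - g βinf) / t)
        (nhdsWithin 0 (Set.Ioi 0)) (nhds L) := by
  obtain ⟨C, hCnn, hXle⟩ := mulVecE_bound X
  have hp1cont : Continuous p1 := hp1.continuous'
  have hp2cont : Continuous p2 := hp2smooth.continuous
  have hgradcont : Continuous (fun x => gradient p2 x) := gradient_cont hp2smooth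
  have hXcont : Continuous (mulVecE X) := mulVecE_cont X
  -- inner product bound
  have hinner : ∀ k, |⟪δ k, β (k + 1) - β k⟫| ≤ σs k / 4 * ‖β (k + 1) - β k‖ ^ 2 +
      τs k / 2 * ‖mulVecE X (β (k + 1)) - mulVecE X (β k)‖ ^ 2 := by
    intro k
    by_cases h : β (k + 1) = β k
    · rw [hδzero k h]
      simp only [inner_zero_left, abs_zero]
      have h1 := (hσpos k).le
      have h2 := (hτpos k).le
      positivity
    · have hpos : 0 < ‖β (k + 1) - β k‖ := by
        rw [norm_pos_iff]; exact sub_ne_zero_of_ne h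
      calc |⟪δ k, β (k + 1) - β k⟫| ≤ ‖δ k‖ * ‖β (k + 1) - β k‖ :=
            abs_real_inner_le_norm _ _
        _ ≤ (σs k / 4 * ‖β (k + 1) - β k‖ +
              τs k * ‖mulVecE X (β (k + 1) - β k)‖ ^ 2 / (2 * ‖β (k + 1) - β k‖)) *
              ‖β (k + 1) - β k‖ :=
            mul_le_mul_of_nonneg_right (hδbound k h) (norm_nonneg _)
        _ = σs k / 4 * ‖β (k + 1) - β k‖ ^ 2 +
              τs k / 2 * ‖mulVecE X (β (k + 1) - β k)‖ ^ 2 := by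
            field_simp
        _ = σs k / 4 * ‖β (k + 1) - β k‖ ^ 2 +
              τs k / 2 * ‖mulVecE X (β (k + 1)) - mulVecE X (β k)‖ ^ 2 := by
            rw [mulVecE_sub]
  -- descent
  have hdesc : ∀ k, g (β (k + 1)) + σs k / 4 * ‖β (k + 1) - β k‖ ^ 2 ≤ g (β k) := by
    intro k
    have h1 := hmin k (β k)
    have e0 : hk k (β k) = g (β k) := by
      rw [hhk, hg]; simp
    have e1 : ⟪δ k, β k - β k⟫ = (0 : ℝ) := by simp
    have e2 : g (β (k + 1)) + σs k / 2 * ‖β (k + 1) - β k‖ ^ 2 +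
        τs k / 2 * ‖mulVecE X (β (k + 1)) - mulVecE X (β k)‖ ^ 2 ≤ hk k (β (k + 1)) := by
      rw [hhk, hg]
      have := grad_ineq hp2conv hp2smooth (β k) (β (k + 1))
      linarith
    have h3 := (hinner k)
    have h4 := neg_abs_le ⟪δ k, β (k + 1) - β k⟫
    rw [e0, e1] at h1
    linarith
  have hmono : ∀ k, g (β (k + 1)) ≤ g (β k) := by
    intro k
    have hσ := (hσpos k).le
    have h0 : 0 ≤ σs k / 4 * ‖β (k + 1) - β k‖ ^ 2 := by positivity
    linarith [hdesc k]
  have hanti : Antitone fun k => g (β k) := antitone_nat_of_succ_le hmono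
  have hbdd : BddBelow (Set.range fun k => g (β k)) :=
    hgbdd.mono (Set.range_comp_subset_range β g)
  have hgconv : Tendsto (fun k => g (β k)) atTop (nhds (⨅ k, g (β k))) :=
    tendsto_atTop_ciInf hanti hbdd
  have hdiff0 : Tendsto (fun k => g (β k) - g (β (k + 1))) atTop (nhds 0) := by
    have h2 : Tendsto (fun k => g (β (k + 1))) atTop (nhds (⨅ k, g (β k))) :=
      hgconv.comp (tendsto_add_atTop_nat 1)
    simpa using hgconv.sub h2
  have hΔsq : Tendsto (fun k => ‖β (k + 1) - β k‖ ^ 2) atTop (nhds 0) := by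
    have hb : ∀ k, ‖β (k + 1) - β k‖ ^ 2 ≤ 4 * (g (β k) - g (β (k + 1))) / σs k := by
      intro k
      have h := hdesc k
      have hσ := hσpos k
      rw [le_div_iff₀ hσ]
      nlinarith [hdesc k]
    have hg2 : Tendsto (fun k => 4 * (g (β k) - g (β (k + 1))) / σs k) atTop (nhds 0) := by
      have := (hdiff0.const_mul (4:ℝ)).div hσtend hσinf.ne'
      rw [mul_zero, zero_div] at this
      exact this
    exact squeeze_zero (fun k => by positivity) hb hg2
  have hΔn : Tendsto (fun k => ‖β (k + 1) - β k‖) atTop (nhds 0) := by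
    have := (Real.continuous_sqrt.tendsto 0).comp hΔsq
    simp only [Real.sqrt_zero] at this
    refine this.congr fun k => ?_
    exact Real.sqrt_sq (norm_nonneg _)
  have hΔ0 : Tendsto (fun k => β (k + 1) - β k) atTop (nhds 0) :=
    tendsto_zero_iff_norm_tendsto_zero.mpr hΔn
  -- δ tends to zero
  have hδn : Tendsto (fun k => ‖δ k‖) atTop (nhds 0) := by
    have hb : ∀ k, ‖δ k‖ ≤ (σs k / 4 + τs k * C ^ 2 / 2) * ‖β (k + 1) - β k‖ := by
      intro k
      by_cases h : β (k + 1) = β k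
      · rw [hδzero k h]
        have : (0:ℝ) ≤ (σs k / 4 + τs k * C ^ 2 / 2) * ‖β (k + 1) - β k‖ := by
          have := (hσpos k).le; have := (hτpos k).le; positivity
        simpa using this
      · have hpos : 0 < ‖β (k + 1) - β k‖ := by
          rw [norm_pos_iff]; exact sub_ne_zero_of_ne h
        have h2 : τs k * ‖mulVecE X (β (k + 1) - β k)‖ ^ 2 / (2 * ‖β (k + 1) - β k‖) ≤
            τs k * C ^ 2 / 2 * ‖β (k + 1) - β k‖ := by
          rw [div_le_iff₀ (by positivity)]
          have hX := hXle (β (k + 1) - β k)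
          have h5 := mul_self_le_mul_self (norm_nonneg (mulVecE X (β (k + 1) - β k))) hX
          nlinarith [norm_nonneg (mulVecE X (β (k + 1) - β k)), norm_nonneg (β (k + 1) - β k),
            (hτpos k).le]
        have h1 := hδbound k h
        have : (σs k / 4 + τs k * C ^ 2 / 2) * ‖β (k + 1) - β k‖ =
            σs k / 4 * ‖β (k + 1) - β k‖ + τs k * C ^ 2 / 2 * ‖β (k + 1) - β k‖ := by ring
        rw [this]
        linarith
    have hg2 : Tendsto (fun k => (σs k / 4 + τs k * C ^ 2 / 2) * ‖β (k + 1) - β k‖) atTop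
        (nhds 0) := by
      have := (((hσtend.div_const 4).add ((hτtend.mul_const (C ^ 2)).div_const 2)).mul hΔn)
      simpa using this
    exact squeeze_zero (fun k => norm_nonneg _) hb hg2
  have hδ0 : Tendsto δ atTop (nhds 0) := tendsto_zero_iff_norm_tendsto_zero.mpr hδn
  -- subsequence
  obtain ⟨φ, hφmono, hφtend⟩ := TopologicalSpace.FirstCountableTopology.tendsto_subseq hcluster
  have hφatTop : Tendsto φ atTop atTop := hφmono.tendsto_atTop
  have hu : Tendsto (fun j => β (φ j)) atTop (nhds βinf) := hφtend
  have hv : Tendsto (fun j => β (φ j + 1)) atTop (nhds βinf) := by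
    have h1 : Tendsto (fun j => (β (φ j + 1) - β (φ j)) + β (φ j)) atTop (nhds (0 + βinf)) :=
      (hΔ0.comp hφatTop).add hu
    simpa using h1
  have hs : Tendsto (fun j => σs (φ j)) atTop (nhds σinf) := hσtend.comp hφatTop
  have ht : Tendsto (fun j => τs (φ j)) atTop (nhds τinf) := hτtend.comp hφatTop
  have hw : Tendsto (fun j => δ (φ j)) atTop (nhds 0) := hδ0.comp hφatTop
  -- limit minimization property
  have hminf : ∀ x, g βinf ≤ ‖mulVecE X x - b‖ + lam * p1 x - p2 βinf -
      ⟪gradient p2 βinf, x - βinf⟫ + σinf / 2 * ‖x - βinf‖ ^ 2 +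
      τinf / 2 * ‖mulVecE X x - mulVecE X βinf‖ ^ 2 := by
    intro x
    have TXv : Tendsto (fun j => mulVecE X (β (φ j + 1))) atTop (nhds (mulVecE X βinf)) :=
      (hXcont.tendsto _).comp hv
    have TXu : Tendsto (fun j => mulVecE X (β (φ j))) atTop (nhds (mulVecE X βinf)) :=
      (hXcont.tendsto _).comp hu
    have Tgrad : Tendsto (fun j => gradient p2 (β (φ j))) atTop (nhds (gradient p2 βinf)) :=
      (hgradcont.tendsto _).comp hu
    have Tsub : Tendsto (fun j => β (φ j + 1) - β (φ j)) atTop (nhds 0) := by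
      have := hv.sub hu; simpa using this
    have TA : Tendsto (fun j =>
        ‖mulVecE X (β (φ j + 1)) - b‖ + lam * p1 (β (φ j + 1)) - p2 (β (φ j)) -
        ⟪gradient p2 (β (φ j)), β (φ j + 1) - β (φ j)⟫ +
        σs (φ j) / 2 * ‖β (φ j + 1) - β (φ j)‖ ^ 2 +
        τs (φ j) / 2 * ‖mulVecE X (β (φ j + 1)) - mulVecE X (β (φ j))‖ ^ 2 +
        ⟪δ (φ j), β (φ j + 1) - β (φ j)⟫) atTop (nhds (g βinf)) := by
      have T1 : Tendsto (fun j => ‖mulVecE X (β (φ j + 1)) - b‖) atTop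
          (nhds ‖mulVecE X βinf - b‖) := (TXv.sub_const b).norm
      have T2 : Tendsto (fun j => lam * p1 (β (φ j + 1))) atTop (nhds (lam * p1 βinf)) :=
        ((hp1cont.tendsto _).comp hv).const_mul lam
      have T3 : Tendsto (fun j => p2 (β (φ j))) atTop (nhds (p2 βinf)) :=
        (hp2cont.tendsto _).comp hu
      have T4 : Tendsto (fun j => ⟪gradient p2 (β (φ j)), β (φ j + 1) - β (φ j)⟫) atTop
          (nhds 0) := by
        have h0 : Tendsto (fun j => ⟪gradient p2 (β (φ j)), β (φ j + 1) - β (φ j)⟫) atTop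
            (nhds ⟪gradient p2 βinf, (0 : EuclideanSpace ℝ (Fin n))⟫) := Tgrad.inner Tsub
        simpa using h0
      have T5 : Tendsto (fun j => σs (φ j) / 2 * ‖β (φ j + 1) - β (φ j)‖ ^ 2) atTop
          (nhds 0) := by
        have := (hs.div_const 2).mul (Tsub.norm.pow 2)
        simpa using this
      have T6 : Tendsto (fun j => τs (φ j) / 2 *
          ‖mulVecE X (β (φ j + 1)) - mulVecE X (β (φ j))‖ ^ 2) atTop (nhds 0) := by
        have hXsub : Tendsto (fun j => mulVecE X (β (φ j + 1)) - mulVecE X (β (φ j))) atTop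
            (nhds 0) := by
          have := TXv.sub TXu; simpa using this
        have := (ht.div_const 2).mul (hXsub.norm.pow 2)
        simpa using this
      have T7 : Tendsto (fun j => ⟪δ (φ j), β (φ j + 1) - β (φ j)⟫) atTop (nhds 0) := by
        have h0 : Tendsto (fun j => ⟪δ (φ j), β (φ j + 1) - β (φ j)⟫) atTop
            (nhds ⟪(0 : EuclideanSpace ℝ (Fin n)), (0 : EuclideanSpace ℝ (Fin n))⟫) :=
          hw.inner Tsub
        simpa using h0
      have := (((((T1.add T2).sub T3).sub T4).add T5).add T6).add T7
      rw [hg]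
      simpa using this
    have TB : Tendsto (fun j =>
        ‖mulVecE X x - b‖ + lam * p1 x - p2 (β (φ j)) -
        ⟪gradient p2 (β (φ j)), x - β (φ j)⟫ +
        σs (φ j) / 2 * ‖x - β (φ j)‖ ^ 2 +
        τs (φ j) / 2 * ‖mulVecE X x - mulVecE X (β (φ j))‖ ^ 2 +
        ⟪δ (φ j), x - β (φ j)⟫) atTop (nhds
        (‖mulVecE X x - b‖ + lam * p1 x - p2 βinf - ⟪gradient p2 βinf, x - βinf⟫ +
          σinf / 2 * ‖x - βinf‖ ^ 2 + τinf / 2 * ‖mulVecE X x - mulVecE X βinf‖ ^ 2)) := by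
      have TXu : Tendsto (fun j => mulVecE X (β (φ j))) atTop (nhds (mulVecE X βinf)) :=
        (hXcont.tendsto _).comp hu
      have Tgrad : Tendsto (fun j => gradient p2 (β (φ j))) atTop (nhds (gradient p2 βinf)) :=
        (hgradcont.tendsto _).comp hu
      have T1 : Tendsto (fun _ : ℕ => ‖mulVecE X x - b‖ + lam * p1 x) atTop
          (nhds (‖mulVecE X x - b‖ + lam * p1 x)) := tendsto_const_nhds
      have T3 : Tendsto (fun j => p2 (β (φ j))) atTop (nhds (p2 βinf)) :=
        (hp2cont.tendsto _).comp hu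
      have T4 : Tendsto (fun j => ⟪gradient p2 (β (φ j)), x - β (φ j)⟫) atTop
          (nhds ⟪gradient p2 βinf, x - βinf⟫) := Tgrad.inner (tendsto_const_nhds.sub hu)
      have T5 : Tendsto (fun j => σs (φ j) / 2 * ‖x - β (φ j)‖ ^ 2) atTop
          (nhds (σinf / 2 * ‖x - βinf‖ ^ 2)) :=
        (hs.div_const 2).mul (((tendsto_const_nhds.sub hu).norm).pow 2)
      have T6 : Tendsto (fun j => τs (φ j) / 2 * ‖mulVecE X x - mulVecE X (β (φ j))‖ ^ 2)
          atTop (nhds (τinf / 2 * ‖mulVecE X x - mulVecE X βinf‖ ^ 2)) :=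
        (ht.div_const 2).mul (((tendsto_const_nhds.sub TXu).norm).pow 2)
      have T7 : Tendsto (fun j => ⟪δ (φ j), x - β (φ j)⟫) atTop (nhds 0) := by
        have h0 : Tendsto (fun j => ⟪δ (φ j), x - β (φ j)⟫) atTop
            (nhds ⟪(0 : EuclideanSpace ℝ (Fin n)), x - βinf⟫) :=
          hw.inner (tendsto_const_nhds.sub hu)
        simpa using h0
      have := ((((T1.sub T3).sub T4).add T5).add T6).add T7
      simpa using this
    refine le_of_tendsto_of_tendsto' TA TB fun j => ?_
    have hj := hmin (φ j) x
    rw [hhk, hhk] at hj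
    exact hj
  exact dstat_of_min X b lam hlam p1 hp1.1 hp1.2.1 p2 hp2smooth g hg σinf τinf hσinf.le hτinf
    βinf hminf
end
end
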